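/- Every 2×2 real matrix P with strictly positive entries admits a factorization P = B·Cᵀ where B and C are 2×2 real matrices with strictly positive entries. -/
import Mathlib


theorem stmt_9 (P : Matrix (Fin 2) (Fin 2) ℝ) (hpos : ∀ i j, 0 < P i j) :
    ∃ B C : Matrix (Fin 2) (Fin 2) ℝ,
      (∀ i j, 0 < B i j) ∧ (∀ i j, 0 < C i j) ∧ P = B * C.transpose := by
  set a := P 0 0 with ha'
  set b := P 0 1 with hb'
  set c := P 1 0 with hc'
  set d := P 1 1 with hd'
  have ha : 0 < a := hpos 0 0
  have hb : 0 < b := hpos 0 1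
  have hc : 0 < c := hpos 1 0
  have hd : 0 < d := hpos 1 1
  set m := min (min a b) (min c d) with hm'
  set M := max (max a b) (max c d) with hM'
  have hm : 0 < m := by positivity
  have hM : 0 < M := lt_of_lt_of_le ha (le_trans (le_max_left a b) (le_max_left _ _))
  set e := m / (2 * M) with he'
  have he : 0 < e := by positivity
  have key : ∀ x y : ℝ, x ≤ M → m ≤ y → e * x < y := by
    intro x y hx hy
    have h1 : e * x ≤ m / 2 := by
      rw [he']
      rw [div_mul_eq_mul_div, div_le_div_iff₀ (by positivity) (by norm_num)]
      nlinarith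
    linarith
  have haM : a ≤ M := le_trans (le_max_left a b) (le_max_left _ _)
  have hbM : b ≤ M := le_trans (le_max_right a b) (le_max_left _ _)
  have hcM : c ≤ M := le_trans (le_max_left c d) (le_max_right _ _)
  have hdM : d ≤ M := le_trans (le_max_right c d) (le_max_right _ _)
  have hma : m ≤ a := le_trans (min_le_left _ _) (min_le_left a b)
  have hmb : m ≤ b := le_trans (min_le_left _ _) (min_le_right a b)
  have hmc : c ≥ m := le_trans (min_le_right _ _) (min_le_left c d)
  have hmd : d ≥ m := le_trans (min_le_right _ _) (min_le_right c d)
  have hmM : m ≤ M := le_trans hma haM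
  have he1 : e < 1 := by
    rw [he', div_lt_one (by positivity)]
    nlinarith
  have h1 : (0:ℝ) < 1 - e ^ 2 := by nlinarith
  refine ⟨!![(a - e*b)/(1 - e^2), (b - e*a)/(1 - e^2);
             (c - e*d)/(1 - e^2), (d - e*c)/(1 - e^2)],
          !![1, e; e, 1], ?_, ?_, ?_⟩
  · intro i j
    fin_cases i <;> fin_cases j <;> simp [Matrix.cons_val_zero, Matrix.cons_val_one] <;>
      apply div_pos (by nlinarith [key b a hbM hma, key a b haM hmb, key d c hdM hmc, key c d hcM hmd]) h1
  · intro i j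
    fin_cases i <;> fin_cases j <;>
      simp only [Matrix.cons_val', Matrix.cons_val_zero, Matrix.cons_val_one,
        Matrix.head_cons, Matrix.empty_val', Matrix.cons_val_fin_one, Matrix.of_apply,
        Matrix.head_fin_const] <;> first | exact one_pos | exact he
  · have Ct : (!![1, e; e, 1] : Matrix (Fin 2) (Fin 2) ℝ).transpose = !![1, e; e, 1] := by
      ext i j; fin_cases i <;> fin_cases j <;> rfl
    rw [Ct]
    have h1' : (1 - e ^ 2) ≠ 0 := ne_of_gt h1
    have e00 : (a - e*b)/(1 - e^2) * 1 + (b - e*a)/(1 - e^2) * e = a := by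
      field_simp; ring
    have e01 : (a - e*b)/(1 - e^2) * e + (b - e*a)/(1 - e^2) * 1 = b := by
      field_simp; ring
    have e10 : (c - e*d)/(1 - e^2) * 1 + (d - e*c)/(1 - e^2) * e = c := by
      field_simp; ring
    have e11 : (c - e*d)/(1 - e^2) * e + (d - e*c)/(1 - e^2) * 1 = d := by
      field_simp; ring
    rw [show (!![1, e; e, 1] : Matrix (Fin 2) (Fin 2) ℝ) = !![1, e; e, 1].transpose from Ct.symm ▸ rfl, Ct, Matrix.mul_fin_two, e00, e01, e10, e11, ha', hb', hc', hd']
    exact Matrix.eta_fin_two P
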